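/- Let Q and Q' be strongly locally finite quivers, and let I ⊂ KQ and I' ⊂ KQ' be admissible ideals with induced ideals ℐ, ℐ' in the path categories. Then there is an isomorphism of K-categories K(𝒬 × 𝒬')/(ℐ □ ℐ') ≅ (K𝒬/ℐ) ⊗_K (K𝒬'/ℐ'), where ℐ □ ℐ' is the induced box-product ideal. -/

import Mathlib

/-!
Formalization of a statement from:
"Triangular Matrix Categories Over Path Categories and Quasi-hereditary Categories,
as well as One-Point Extensions by projectives" by R. Ochoa, M. Ortíz.
-/

open CategoryTheory CategoryTheory.Limits

attribute [local instance] CategoryTheory.Limits.hasBinaryBiproducts_of_finite_biproducts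
  CategoryTheory.Limits.hasBiproductsOfShape_finite
  CategoryTheory.Limits.HasFiniteBiproducts.of_hasFiniteProducts

noncomputable section

namespace Paper
/-- The path category `K𝒬` of a quiver (in the sense of Ringel): objects are the
vertices, and `Hom(a,b)` is the free `K`-vector space on the set of paths from `a`
to `b`, with composition induced by concatenation of paths. -/
def PathCat (K V : Type) [Field K] [Quiver.{0} V] := V

namespace PathCat

variable {K : Type} [Field K] {V : Type} [Quiver.{0} V]

/-- View a vertex as an object of the path category. -/
def vtx (K : Type) [Field K] (v : V) : PathCat K V := v
/-- The vertex underlying an object of the path category. -/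
def out (v : PathCat K V) : V := v

/-- Composition (by linear extension of concatenation of paths). -/
def pcomp {a b c : V} (f : Quiver.Path a b →₀ K) (g : Quiver.Path b c →₀ K) :
    Quiver.Path a c →₀ K :=
  f.sum fun p cp => g.sum fun q cq => Finsupp.single (p.comp q) (cp * cq)

lemma pcomp_single_single {a b c : V} (p : Quiver.Path a b) (q : Quiver.Path b c) (x y : K) :
    pcomp (Finsupp.single p x) (Finsupp.single q y) = Finsupp.single (p.comp q) (x * y) := by
  rw [pcomp, Finsupp.sum_single_index, Finsupp.sum_single_index]
  · simp
  · rw [Finsupp.sum_single_index] <;> simp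

lemma zero_pcomp {a b c : V} (g : Quiver.Path b c →₀ K) :
    pcomp (0 : Quiver.Path a b →₀ K) g = 0 := by
  simp [pcomp]

lemma pcomp_zero {a b c : V} (f : Quiver.Path a b →₀ K) :
    pcomp f (0 : Quiver.Path b c →₀ K) = 0 := by
  simp [pcomp]

lemma add_pcomp {a b c : V} (f f' : Quiver.Path a b →₀ K) (g : Quiver.Path b c →₀ K) :
    pcomp (f + f') g = pcomp f g + pcomp f' g := by
  classical
  rw [pcomp, Finsupp.sum_add_index']
  · rfl
  · intro p; simp
  · intro p x y
    rw [← Finsupp.sum_add]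
    congr 1; funext q cq
    rw [add_mul, Finsupp.single_add]

lemma pcomp_add {a b c : V} (f : Quiver.Path a b →₀ K) (g g' : Quiver.Path b c →₀ K) :
    pcomp f (g + g') = pcomp f g + pcomp f g' := by
  classical
  rw [pcomp, pcomp, pcomp, ← Finsupp.sum_add]
  congr 1; funext p cp
  rw [Finsupp.sum_add_index']
  · intro q; simp
  · intro q x y
    rw [mul_add, Finsupp.single_add]

lemma smul_pcomp {a b c : V} (x : K) (f : Quiver.Path a b →₀ K) (g : Quiver.Path b c →₀ K) :
    pcomp (x • f) g = x • pcomp f g := by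
  classical
  induction f using Finsupp.induction_linear with
  | zero => simp [zero_pcomp]
  | add f f' hf hf' => rw [smul_add, add_pcomp, hf, hf', add_pcomp, smul_add]
  | single p c =>
    induction g using Finsupp.induction_linear with
    | zero => simp [pcomp_zero]
    | add g g' hg hg' => rw [pcomp_add, hg, hg', pcomp_add, smul_add]
    | single q d =>
      rw [Finsupp.smul_single, pcomp_single_single, pcomp_single_single,
        Finsupp.smul_single, smul_eq_mul, smul_eq_mul, mul_assoc]

lemma pcomp_smul {a b c : V} (x : K) (f : Quiver.Path a b →₀ K) (g : Quiver.Path b c →₀ K) :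
    pcomp f (x • g) = x • pcomp f g := by
  classical
  induction f using Finsupp.induction_linear with
  | zero => simp [zero_pcomp]
  | add f f' hf hf' => rw [add_pcomp, hf, hf', add_pcomp, smul_add]
  | single p c =>
    induction g using Finsupp.induction_linear with
    | zero => simp [pcomp_zero]
    | add g g' hg hg' => rw [smul_add, pcomp_add, hg, hg', pcomp_add, smul_add]
    | single q d =>
      rw [Finsupp.smul_single, pcomp_single_single, pcomp_single_single,
        Finsupp.smul_single, smul_eq_mul, smul_eq_mul, mul_left_comm]

instance : Category.{0} (PathCat K V) where
  Hom a b := Quiver.Path (out a) (out b) →₀ K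
  id a := Finsupp.single Quiver.Path.nil 1
  comp f g := pcomp f g
  id_comp {a b} f := by
    show pcomp (Finsupp.single Quiver.Path.nil 1) f = f
    classical
    induction f using Finsupp.induction_linear with
    | zero => simp [pcomp_zero]
    | add f f' hf hf' => rw [pcomp_add, hf, hf']
    | single p c => rw [pcomp_single_single, Quiver.Path.nil_comp, one_mul]
  comp_id {a b} f := by
    show pcomp f (Finsupp.single Quiver.Path.nil 1) = f
    classical
    induction f using Finsupp.induction_linear with
    | zero => simp [zero_pcomp]
    | add f f' hf hf' => rw [add_pcomp, hf, hf']
    | single p c => rw [pcomp_single_single, Quiver.Path.comp_nil, mul_one]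
  assoc {a b c d} f g h := by
    show pcomp (pcomp f g) h = pcomp f (pcomp g h)
    classical
    induction f using Finsupp.induction_linear with
    | zero => simp [zero_pcomp]
    | add f f' hf hf' => rw [add_pcomp, add_pcomp, hf, hf', add_pcomp]
    | single p x =>
      induction g using Finsupp.induction_linear with
      | zero => simp [zero_pcomp, pcomp_zero]
      | add g g' hg hg' => rw [pcomp_add, add_pcomp, hg, hg', add_pcomp, pcomp_add]
      | single q y =>
        induction h using Finsupp.induction_linear with
        | zero => simp [pcomp_zero]
        | add h h' hh hh' => rw [pcomp_add, pcomp_add, hh, hh', pcomp_add]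
        | single r z =>
          rw [pcomp_single_single, pcomp_single_single, pcomp_single_single,
            pcomp_single_single, Quiver.Path.comp_assoc, mul_assoc]

instance : Preadditive (PathCat K V) where
  homGroup a b := inferInstanceAs (AddCommGroup (Quiver.Path (out a) (out b) →₀ K))
  add_comp _ _ _ f f' g := add_pcomp f f' g
  comp_add _ _ _ f g g' := pcomp_add f g g'

instance : CategoryTheory.Linear K (PathCat K V) where
  homModule a b := inferInstanceAs (Module K (Quiver.Path (out a) (out b) →₀ K))
  smul_comp _ _ _ x f g := smul_pcomp x f g
  comp_smul _ _ _ f x g := pcomp_smul x f g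

/-- The class in `K𝒬` of a single path, as a morphism. -/
def ofPath {a b : V} (p : Quiver.Path a b) : (vtx K a : PathCat K V) ⟶ vtx K b :=
  Finsupp.single p 1

end PathCat

variable {K : Type} [Field K]
variable {C : Type} [Category.{0} C] [Preadditive C] [CategoryTheory.Linear K C]

structure CatIdeal (K : Type) [Field K] (C : Type) [Category.{0} C] [Preadditive C]
    [CategoryTheory.Linear K C] where
  I : ∀ X Y : C, Submodule K (X ⟶ Y)
  comp_left : ∀ {X Y Z : C} (f : X ⟶ Y) (g : Y ⟶ Z), f ∈ I X Y → f ≫ g ∈ I X Z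
  comp_right : ∀ {X Y Z : C} (f : X ⟶ Y) (g : Y ⟶ Z), g ∈ I Y Z → f ≫ g ∈ I X Z

/-- The quotient category `C/I` of a `K`-linear category by a two-sided ideal. -/
def CatQuot (I : CatIdeal K C) := C

namespace CatQuot

variable (I : CatIdeal K C)

/-- An object of `C` as an object of `C/I`. -/
def obj (X : C) : CatQuot I := X
variable {I}

/-- The object of `C` underlying an object of `C/I`. -/
def out (X : CatQuot I) : C := X

instance : Category.{0} (CatQuot I) where
  Hom X Y := (out X ⟶ out Y) ⧸ I.I (out X) (out Y)
  id X := Submodule.Quotient.mk (𝟙 (out X))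
  comp {X Y Z} f g :=
    Quotient.liftOn₂' f g (fun f g => Submodule.Quotient.mk (f ≫ g)) (by
      intro a₁ b₁ a₂ b₂ ha hb
      rw [Submodule.quotientRel_def] at ha hb
      apply (Submodule.Quotient.eq _).2
      have : a₁ ≫ b₁ - a₂ ≫ b₂ = (a₁ - a₂) ≫ b₁ + a₂ ≫ (b₁ - b₂) := by
        rw [Preadditive.sub_comp, Preadditive.comp_sub]
        abel
      rw [this]
      exact Submodule.add_mem _ (I.comp_left _ _ ha) (I.comp_right _ _ hb))
  id_comp f := by
    obtain ⟨f, rfl⟩ := Submodule.Quotient.mk_surjective _ f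
    show Submodule.Quotient.mk _ = _
    rw [Category.id_comp]
  comp_id f := by
    obtain ⟨f, rfl⟩ := Submodule.Quotient.mk_surjective _ f
    show Submodule.Quotient.mk _ = _
    rw [Category.comp_id]
  assoc f g h := by
    obtain ⟨f, rfl⟩ := Submodule.Quotient.mk_surjective _ f
    obtain ⟨g, rfl⟩ := Submodule.Quotient.mk_surjective _ g
    obtain ⟨h, rfl⟩ := Submodule.Quotient.mk_surjective _ h
    show Submodule.Quotient.mk _ = Submodule.Quotient.mk _
    rw [Category.assoc]

/-- The class of a morphism of `C` in the quotient category. -/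
def mkHom {X Y : C} (f : X ⟶ Y) : (obj I X ⟶ obj I Y) :=
  show (X ⟶ Y) ⧸ I.I X Y from Submodule.Quotient.mk f

instance : Preadditive (CatQuot I) where
  homGroup X Y := inferInstanceAs (AddCommGroup ((out X ⟶ out Y) ⧸ I.I (out X) (out Y)))
  add_comp X Y Z f f' g := by
    obtain ⟨f, rfl⟩ := Submodule.Quotient.mk_surjective _ f
    obtain ⟨f', rfl⟩ := Submodule.Quotient.mk_surjective _ f'
    obtain ⟨g, rfl⟩ := Submodule.Quotient.mk_surjective _ g
    show Submodule.Quotient.mk ((f + f') ≫ g)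
      = Submodule.Quotient.mk (f ≫ g) + Submodule.Quotient.mk (f' ≫ g)
    rw [Preadditive.add_comp, Submodule.Quotient.mk_add]
  comp_add X Y Z f g g' := by
    obtain ⟨f, rfl⟩ := Submodule.Quotient.mk_surjective _ f
    obtain ⟨g, rfl⟩ := Submodule.Quotient.mk_surjective _ g
    obtain ⟨g', rfl⟩ := Submodule.Quotient.mk_surjective _ g'
    show Submodule.Quotient.mk (f ≫ (g + g'))
      = Submodule.Quotient.mk (f ≫ g) + Submodule.Quotient.mk (f ≫ g')
    rw [Preadditive.comp_add, Submodule.Quotient.mk_add]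

instance : CategoryTheory.Linear K (CatQuot I) where
  homModule X Y := inferInstanceAs (Module K ((out X ⟶ out Y) ⧸ I.I (out X) (out Y)))
  smul_comp X Y Z x f g := by
    obtain ⟨f, rfl⟩ := Submodule.Quotient.mk_surjective _ f
    obtain ⟨g, rfl⟩ := Submodule.Quotient.mk_surjective _ g
    show Quotient.liftOn₂' _ _ _ _ = _
    rw [show (x • Submodule.Quotient.mk f : (out X ⟶ out Y) ⧸ I.I _ _)
      = Submodule.Quotient.mk (x • f) from rfl]
    show Submodule.Quotient.mk ((x • f) ≫ g) = _
    rw [CategoryTheory.Linear.smul_comp]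
    rfl
  comp_smul X Y Z f x g := by
    obtain ⟨f, rfl⟩ := Submodule.Quotient.mk_surjective _ f
    obtain ⟨g, rfl⟩ := Submodule.Quotient.mk_surjective _ g
    rw [show (x • Submodule.Quotient.mk g : (out Y ⟶ out Z) ⧸ I.I _ _)
      = Submodule.Quotient.mk (x • g) from rfl]
    show Submodule.Quotient.mk (f ≫ (x • g)) = _
    rw [CategoryTheory.Linear.comp_smul]
    rfl

/-- The quotient functor `C ⥤ C/I`. -/
def quotFunctor (I : CatIdeal K C) : C ⥤ CatQuot I where
  obj X := obj I X
  map f := mkHom f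
  map_id X := rfl
  map_comp f g := rfl

end CatQuot

section TensorCatSection
open TensorProduct

/-- The tensor product `C ⊗_K D` of two `K`-linear categories: objects are pairs, and
`Hom((c,d),(c',d')) = C(c,c') ⊗_K D(d,d')`, with composition induced by the compositions
of `C` and `D` on simple tensors. -/
def TensorCat (K C D : Type) [Field K] [Category.{0} C] [Category.{0} D]
    [Preadditive C] [Preadditive D]
    [CategoryTheory.Linear K C] [CategoryTheory.Linear K D] := C × D

namespace TensorCat

variable {K C D : Type} [Field K] [Category.{0} C] [Category.{0} D]
  [Preadditive C] [Preadditive D] [CategoryTheory.Linear K C] [CategoryTheory.Linear K D]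

/-- Pairs as objects of the tensor product category. -/
def mk (c : C) (d : D) : TensorCat K C D := (c, d)

def fst (X : TensorCat K C D) : C := X.1
def snd (X : TensorCat K C D) : D := X.2

/-- Composition with a fixed simple tensor, as a bilinear map. -/
def compAux (X Y Z : TensorCat K C D) (f : fst X ⟶ fst Y) (g : snd X ⟶ snd Y) :
    (fst Y ⟶ fst Z) →ₗ[K] (snd Y ⟶ snd Z) →ₗ[K]
      ((fst X ⟶ fst Z) ⊗[K] (snd X ⟶ snd Z)) :=
  LinearMap.mk₂ K (fun f' g' => (f ≫ f') ⊗ₜ[K] (g ≫ g'))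
    (fun f' f'' g' => by rw [Preadditive.comp_add, add_tmul])
    (fun c f' g' => by rw [CategoryTheory.Linear.comp_smul, smul_tmul'])
    (fun f' g' g'' => by rw [Preadditive.comp_add, tmul_add])
    (fun c f' g' => by rw [CategoryTheory.Linear.comp_smul, tmul_smul])

/-- Composition in the tensor product category, as a bilinear map. -/
def compBil (X Y Z : TensorCat K C D) :
    (fst X ⟶ fst Y) →ₗ[K] (snd X ⟶ snd Y) →ₗ[K]
      (((fst Y ⟶ fst Z) ⊗[K] (snd Y ⟶ snd Z)) →ₗ[K]
        ((fst X ⟶ fst Z) ⊗[K] (snd X ⟶ snd Z))) :=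
  LinearMap.mk₂ K (fun f g => TensorProduct.lift (compAux X Y Z f g))
    (fun f f' g => by
      apply TensorProduct.ext'
      intro x y
      simp only [TensorProduct.lift.tmul,LinearMap.add_apply, compAux, LinearMap.mk₂_apply]
      rw [Preadditive.add_comp, add_tmul])
    (fun c f g => by
      apply TensorProduct.ext'
      intro x y
      simp only [TensorProduct.lift.tmul, LinearMap.smul_apply, compAux, LinearMap.mk₂_apply]
      rw [CategoryTheory.Linear.smul_comp, smul_tmul'])
    (fun f g g' => by
      apply TensorProduct.ext'
      intro x y
      simp only [TensorProduct.lift.tmul, LinearMap.add_apply, compAux, LinearMap.mk₂_apply]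
      rw [Preadditive.add_comp, tmul_add])
    (fun c f g => by
      apply TensorProduct.ext'
      intro x y
      simp only [TensorProduct.lift.tmul, LinearMap.smul_apply, compAux, LinearMap.mk₂_apply]
      rw [CategoryTheory.Linear.smul_comp, tmul_smul])

instance : Category.{0} (TensorCat K C D) where
  Hom X Y := (fst X ⟶ fst Y) ⊗[K] (snd X ⟶ snd Y)
  id X := 𝟙 (fst X) ⊗ₜ[K] 𝟙 (snd X)
  comp {X Y Z} fg fg' := TensorProduct.lift (compBil X Y Z) fg fg'
  id_comp {X Y} fg := by
    show TensorProduct.lift (compBil X X Y) (𝟙 (fst X) ⊗ₜ[K] 𝟙 (snd X)) fg = fg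
    induction fg using TensorProduct.induction_on with
    | zero => simp
    | tmul x y =>
      simp only [TensorProduct.lift.tmul, compBil, compAux, LinearMap.mk₂_apply]
      rw [Category.id_comp, Category.id_comp]
    | add fg fg' h h' => simp only [map_add, h, h']
  comp_id {X Y} fg := by
    show TensorProduct.lift (compBil X Y Y) fg (𝟙 (fst Y) ⊗ₜ[K] 𝟙 (snd Y)) = fg
    induction fg using TensorProduct.induction_on with
    | zero => simp
    | tmul x y =>
      simp only [TensorProduct.lift.tmul, compBil, compAux, LinearMap.mk₂_apply]
      rw [Category.comp_id, Category.comp_id]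
    | add fg fg' h h' => simp only [map_add, LinearMap.add_apply, h, h']
  assoc {W X Y Z} fg fg' fg'' := by
    show TensorProduct.lift (compBil W Y Z) (TensorProduct.lift (compBil W X Y) fg fg') fg''
      = TensorProduct.lift (compBil W X Z) fg (TensorProduct.lift (compBil X Y Z) fg' fg'')
    induction fg using TensorProduct.induction_on with
    | zero => simp
    | add a b ha hb => simp only [map_add, LinearMap.add_apply, ha, hb]
    | tmul f g =>
      induction fg' using TensorProduct.induction_on with
      | zero => simp
      | add a b ha hb => simp only [map_add, LinearMap.add_apply, ha, hb]
      | tmul f' g' =>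
        induction fg'' using TensorProduct.induction_on with
        | zero => simp
        | add a b ha hb => simp only [map_add, LinearMap.add_apply, ha, hb]
        | tmul f'' g'' =>
          simp only [TensorProduct.lift.tmul, compBil, compAux, LinearMap.mk₂_apply]
          rw [Category.assoc, Category.assoc]

instance : Preadditive (TensorCat K C D) where
  homGroup X Y := inferInstanceAs (AddCommGroup ((fst X ⟶ fst Y) ⊗[K] (snd X ⟶ snd Y)))
  add_comp X Y Z f f' g := by
    exact LinearMap.congr_fun
      (map_add (TensorProduct.lift (compBil X Y Z))
        (show (fst X ⟶ fst Y) ⊗[K] (snd X ⟶ snd Y) from f)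
        (show (fst X ⟶ fst Y) ⊗[K] (snd X ⟶ snd Y) from f'))
      (show (fst Y ⟶ fst Z) ⊗[K] (snd Y ⟶ snd Z) from g)
  comp_add X Y Z f g g' := by
    exact map_add (TensorProduct.lift (compBil X Y Z) f)
      (show (fst Y ⟶ fst Z) ⊗[K] (snd Y ⟶ snd Z) from g)
      (show (fst Y ⟶ fst Z) ⊗[K] (snd Y ⟶ snd Z) from g')

instance : CategoryTheory.Linear K (TensorCat K C D) where
  homModule X Y := inferInstanceAs (Module K ((fst X ⟶ fst Y) ⊗[K] (snd X ⟶ snd Y)))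
  smul_comp X Y Z c f g := by
    exact LinearMap.congr_fun
      (map_smul (TensorProduct.lift (compBil X Y Z)) c
        (show (fst X ⟶ fst Y) ⊗[K] (snd X ⟶ snd Y) from f))
      (show (fst Y ⟶ fst Z) ⊗[K] (snd Y ⟶ snd Z) from g)
  comp_smul X Y Z f c g := by
    exact map_smul (TensorProduct.lift (compBil X Y Z) f) c
      (show (fst Y ⟶ fst Z) ⊗[K] (snd Y ⟶ snd Z) from g)

end TensorCat


end TensorCatSection
section QuiverStuff

/-- A strongly locally finite quiver: locally finite (finitely many arrows starting and
ending at each vertex) and interval finite (finitely many paths between any two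
vertices). -/
class StronglyLocallyFinite (V : Type) [Quiver.{0} V] : Prop where
  out_finite : ∀ a : V, Finite (Σ b : V, a ⟶ b)
  in_finite : ∀ b : V, Finite (Σ a : V, a ⟶ b)
  interval_finite : ∀ a b : V, Finite (Quiver.Path a b)

/-- An isomorphism of `K`-linear categories: a `K`-linear functor which is bijective on
objects and bijective on each Hom space. -/
structure LinearCatIso (K : Type) [Field K] (C D : Type) [Category.{0} C] [Category.{0} D]
    [Preadditive C] [Preadditive D]
    [CategoryTheory.Linear K C] [CategoryTheory.Linear K D] where
  F : C ⥤ D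
  objBijective : Function.Bijective F.obj
  homBijective : ∀ X Y : C, Function.Bijective (F.map : (X ⟶ Y) → (F.obj X ⟶ F.obj Y))
  additive : F.Additive
  linear : F.Linear K

variable {K : Type} [Field K]
variable {C : Type} [Category.{0} C] [Preadditive C] [CategoryTheory.Linear K C]

/-- The two-sided ideal generated by a set of morphisms `G` (given as a set of triples
`⟨A, B, s : A ⟶ B⟩`): the span of all composites `u ≫ s ≫ v` with `s` a generator. -/
def genIdeal (G : Set (Σ (A : C) (B : C), A ⟶ B)) : CatIdeal K C where
  I X Y := Submodule.span K
    {h | ∃ (A B : C) (s : A ⟶ B) (u : X ⟶ A) (v : B ⟶ Y),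
      (⟨A, B, s⟩ : Σ (A : C) (B : C), A ⟶ B) ∈ G ∧ u ≫ s ≫ v = h}
  comp_left {X Y Z} f g hf := by
    induction hf using Submodule.span_induction with
    | mem x hx =>
      obtain ⟨A, B, s, u, v, hs, rfl⟩ := hx
      exact Submodule.subset_span ⟨A, B, s, u, v ≫ g, hs, by simp⟩
    | zero => simp only [Limits.zero_comp]; exact Submodule.zero_mem _
    | add x y _ _ hx hy => simpa [Preadditive.add_comp] using Submodule.add_mem _ hx hy
    | smul c x _ hx => simpa [CategoryTheory.Linear.smul_comp] using Submodule.smul_mem _ c hx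
  comp_right {X Y Z} f g hg := by
    induction hg using Submodule.span_induction with
    | mem x hx =>
      obtain ⟨A, B, s, u, v, hs, rfl⟩ := hx
      refine Submodule.subset_span ⟨A, B, s, f ≫ u, v, hs, by simp⟩
    | zero => simp only [Limits.comp_zero]; exact Submodule.zero_mem _
    | add x y _ _ hx hy => simpa [Preadditive.comp_add] using Submodule.add_mem _ hx hy
    | smul c x _ hx => simpa [CategoryTheory.Linear.comp_smul] using Submodule.smul_mem _ c hx

variable {V : Type} [Quiver.{0} V]

/-- An ideal of a path category is admissible if it is generated by a set of relations,
i.e. by morphisms supported on paths of length at least two. -/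
def IsAdmissible (I : CatIdeal K (PathCat K V)) : Prop :=
  ∃ G : Set (Σ (A : PathCat K V) (B : PathCat K V), A ⟶ B),
    (∀ g ∈ G, ∀ p ∈ (show Quiver.Path (PathCat.out g.1) (PathCat.out g.2.1) →₀ K
        from g.2.2).support, 2 ≤ p.length) ∧
    I = genIdeal G

end QuiverStuff

section BoxProduct

variable (K : Type) [Field K]

/-- The product quiver `Q × Q'`: vertices are pairs, and the arrows are
`(Q₁ × Q'₀) ∪ (Q₀ × Q'₁)`. -/
def BoxQuiver (V W : Type) := V × W

instance {V W : Type} [Quiver.{0} V] [Quiver.{0} W] : Quiver.{0} (BoxQuiver V W) where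
  Hom x y := ((x.1 ⟶ y.1) × PLift (x.2 = y.2)) ⊕ (PLift (x.1 = y.1) × (x.2 ⟶ y.2))

/-- A pair of vertices as a vertex of the product quiver. -/
def BoxQuiver.mk {V W : Type} (p : V) (q : W) : BoxQuiver V W := (p, q)

variable {V W : Type} [Quiver.{0} V] [Quiver.{0} W]

/-- For a fixed vertex `q` of `Q'`, the embedding `Q → Q × Q'`, `p ↦ (p,q)`. -/
def inlPre (q : W) : V ⥤q BoxQuiver V W where
  obj p := (p, q)
  map α := Sum.inl ⟨α, PLift.up rfl⟩

/-- For a fixed vertex `p` of `Q`, the embedding `Q' → Q × Q'`, `q ↦ (p,q)`. -/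
def inrPre (p : V) : W ⥤q BoxQuiver V W where
  obj q := (p, q)
  map β := Sum.inr ⟨PLift.up rfl, β⟩

variable {K}

/-- Lifting a morphism of a path category along a morphism of quivers. -/
def liftHom {V' : Type} [Quiver.{0} V'] (F : V ⥤q V') {a b : V}
    (f : Quiver.Path a b →₀ K) : Quiver.Path (F.obj a) (F.obj b) →₀ K :=
  Finsupp.mapDomain F.mapPath f

/-- The generators of the ideal `I □ I'` in `K(𝒬 × 𝒬')`: the ideal `I'` placed at each
vertex `p` of `Q`, the ideal `I` placed at each vertex `q` of `Q'`, and the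
commutativity relations `(p',β)(α,q) − (α,q')(p,β)`. -/
def boxGens (I : CatIdeal K (PathCat K V)) (I' : CatIdeal K (PathCat K W)) :
    Set (Σ (A : PathCat K (BoxQuiver V W)) (B : PathCat K (BoxQuiver V W)), A ⟶ B) :=
  {g | ∃ (p : V) (q q' : W) (f : Quiver.Path q q' →₀ K),
      (show (PathCat.vtx K q : PathCat K W) ⟶ PathCat.vtx K q' from f) ∈
        I'.I (PathCat.vtx K q) (PathCat.vtx K q') ∧
      g = ⟨PathCat.vtx K (BoxQuiver.mk p q), PathCat.vtx K (BoxQuiver.mk p q'),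
        show Quiver.Path (BoxQuiver.mk p q) (BoxQuiver.mk p q') →₀ K
          from liftHom (inrPre p) f⟩} ∪
  {g | ∃ (p p' : V) (q : W) (f : Quiver.Path p p' →₀ K),
      (show (PathCat.vtx K p : PathCat K V) ⟶ PathCat.vtx K p' from f) ∈
        I.I (PathCat.vtx K p) (PathCat.vtx K p') ∧
      g = ⟨PathCat.vtx K (BoxQuiver.mk p q), PathCat.vtx K (BoxQuiver.mk p' q),
        show Quiver.Path (BoxQuiver.mk p q) (BoxQuiver.mk p' q) →₀ K
          from liftHom (inlPre q) f⟩} ∪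
  {g | ∃ (p p' : V) (q q' : W) (α : p ⟶ p') (β : q ⟶ q'),
      g = ⟨PathCat.vtx K (BoxQuiver.mk p q), PathCat.vtx K (BoxQuiver.mk p' q'),
        show Quiver.Path (BoxQuiver.mk p q) (BoxQuiver.mk p' q') →₀ K from
          Finsupp.single
            ((Quiver.Hom.toPath
                (show (BoxQuiver.mk p q) ⟶ (BoxQuiver.mk p' q)
                  from Sum.inl ⟨α, PLift.up rfl⟩)).comp
              (Quiver.Hom.toPath
                (show (BoxQuiver.mk p' q) ⟶ (BoxQuiver.mk p' q')
                  from Sum.inr ⟨PLift.up rfl, β⟩))) 1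
          - Finsupp.single
            ((Quiver.Hom.toPath
                (show (BoxQuiver.mk p q) ⟶ (BoxQuiver.mk p q')
                  from Sum.inr ⟨PLift.up rfl, β⟩)).comp
              (Quiver.Hom.toPath
                (show (BoxQuiver.mk p q') ⟶ (BoxQuiver.mk p' q')
                  from Sum.inl ⟨α, PLift.up rfl⟩))) 1⟩}

/-- The ideal `ℐ □ ℐ'` of `K(𝒬 × 𝒬')`. -/
def boxIdeal (I : CatIdeal K (PathCat K V)) (I' : CatIdeal K (PathCat K W)) :
    CatIdeal K (PathCat K (BoxQuiver V W)) :=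
  genIdeal (boxGens I I')

end BoxProduct
section AuxProof

open TensorProduct

namespace PathCat

variable {K : Type} [Field K] {V : Type} [Quiver.{0} V]

lemma pcomp_sub {a b c : V} (f : Quiver.Path a b →₀ K) (g g' : Quiver.Path b c →₀ K) :
    pcomp f (g - g') = pcomp f g - pcomp f g' := by
  rw [sub_eq_add_neg, pcomp_add, ← neg_one_smul K g', pcomp_smul, neg_one_smul,
    ← sub_eq_add_neg]

lemma sub_pcomp {a b c : V} (f f' : Quiver.Path a b →₀ K) (g : Quiver.Path b c →₀ K) :
    pcomp (f - f') g = pcomp f g - pcomp f' g := by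
  rw [sub_eq_add_neg, add_pcomp, ← neg_one_smul K f', smul_pcomp, neg_one_smul,
    ← sub_eq_add_neg]

lemma pcomp_assoc {a b c d : V} (f : Quiver.Path a b →₀ K) (g : Quiver.Path b c →₀ K)
    (h : Quiver.Path c d →₀ K) : pcomp (pcomp f g) h = pcomp f (pcomp g h) :=
  Category.assoc (show (vtx K a : PathCat K V) ⟶ vtx K b from f)
    (show (vtx K b : PathCat K V) ⟶ vtx K c from g)
    (show (vtx K c : PathCat K V) ⟶ vtx K d from h)

lemma pcomp_single_nil {a b : V} (f : Quiver.Path a b →₀ K) :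
    pcomp f (Finsupp.single Quiver.Path.nil 1) = f :=
  Category.comp_id (show (vtx K a : PathCat K V) ⟶ vtx K b from f)

end PathCat

namespace CatQuot

variable {K : Type} [Field K] {C : Type} [Category.{0} C] [Preadditive C]
  [CategoryTheory.Linear K C] {I : CatIdeal K C}

lemma mkHom_comp {X Y Z : C} (f : X ⟶ Y) (g : Y ⟶ Z) :
    mkHom (I := I) f ≫ mkHom g = mkHom (f ≫ g) := rfl

lemma mkHom_id (X : C) : mkHom (I := I) (𝟙 X) = 𝟙 (obj I X) := rfl

lemma mkHom_add {X Y : C} (f g : X ⟶ Y) :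
    mkHom (I := I) (f + g) = mkHom f + mkHom g := rfl

lemma mkHom_smul {X Y : C} (c : K) (f : X ⟶ Y) :
    mkHom (I := I) (c • f) = c • mkHom f := rfl

lemma mkHom_eq_zero {X Y : C} {f : X ⟶ Y} (hf : f ∈ I.I X Y) :
    mkHom (I := I) f = 0 := (Submodule.Quotient.mk_eq_zero _).2 hf

lemma mkHom_eq_of_sub_mem {X Y : C} {f g : X ⟶ Y} (h : f - g ∈ I.I X Y) :
    mkHom (I := I) f = mkHom g := (Submodule.Quotient.eq _).2 h

end CatQuot

namespace TensorCat

variable {K C D : Type} [Field K] [Category.{0} C] [Category.{0} D]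
  [Preadditive C] [Preadditive D] [CategoryTheory.Linear K C] [CategoryTheory.Linear K D]

lemma tmul_comp {X Y Z : TensorCat K C D} (f : fst X ⟶ fst Y) (g : snd X ⟶ snd Y)
    (f' : fst Y ⟶ fst Z) (g' : snd Y ⟶ snd Z) :
    (show X ⟶ Y from f ⊗ₜ[K] g) ≫ (show Y ⟶ Z from f' ⊗ₜ[K] g')
      = (f ≫ f') ⊗ₜ[K] (g ≫ g') := by
  show TensorProduct.lift (compBil X Y Z) (f ⊗ₜ g) (f' ⊗ₜ g') = _
  rw [TensorProduct.lift.tmul]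
  simp [compBil, compAux]

end TensorCat

namespace BoxProof

open PathCat CatQuot

variable {K : Type} [Field K] {V W : Type} [Quiver.{0} V] [Quiver.{0} W]

lemma liftHom_pcomp {V' : Type} [Quiver.{0} V'] (F : V ⥤q V') {a b c : V}
    (f : Quiver.Path a b →₀ K) (g : Quiver.Path b c →₀ K) :
    liftHom (K := K) F (pcomp f g) = pcomp (liftHom F f) (liftHom F g) := by
  classical
  induction f using Finsupp.induction_linear with
  | zero => simp [zero_pcomp, liftHom]
  | add f f' hf hf' =>
      rw [add_pcomp]
      simp only [liftHom, Finsupp.mapDomain_add] at hf hf' ⊢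
      rw [hf, hf', add_pcomp]
  | single p c =>
      induction g using Finsupp.induction_linear with
      | zero => simp [pcomp_zero, liftHom]
      | add g g' hg hg' =>
          rw [pcomp_add]
          simp only [liftHom, Finsupp.mapDomain_add] at hg hg' ⊢
          rw [hg, hg', pcomp_add]
      | single q d =>
          rw [pcomp_single_single, liftHom, liftHom, liftHom, Finsupp.mapDomain_single,
            Finsupp.mapDomain_single, Finsupp.mapDomain_single, pcomp_single_single,
            Prefunctor.mapPath_comp]

lemma liftHom_single {V' : Type} [Quiver.{0} V'] (F : V ⥤q V') {a b : V}
    (p : Quiver.Path a b) (c : K) :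
    liftHom (K := K) F (Finsupp.single p c) = Finsupp.single (F.mapPath p) c :=
  Finsupp.mapDomain_single

variable (I : CatIdeal K (PathCat K V)) (I' : CatIdeal K (PathCat K W))

/-- The prefunctor from the box quiver into the tensor product category. -/
def boxPre : BoxQuiver V W ⥤q TensorCat K (CatQuot I) (CatQuot I') where
  obj x := TensorCat.mk (CatQuot.obj I (PathCat.vtx K x.1)) (CatQuot.obj I' (PathCat.vtx K x.2))
  map {x y} e :=
    match e with
    | .inl ⟨α, h⟩ =>
        show (CatQuot.obj I (vtx K x.1) ⟶ CatQuot.obj I (vtx K y.1)) ⊗[K]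
            (CatQuot.obj I' (vtx K x.2) ⟶ CatQuot.obj I' (vtx K y.2)) from
          (CatQuot.mkHom (PathCat.ofPath α.toPath)) ⊗ₜ[K]
            (eqToHom (congrArg (fun w => CatQuot.obj I' (PathCat.vtx K w)) h.down))
    | .inr ⟨h, β⟩ =>
        show (CatQuot.obj I (vtx K x.1) ⟶ CatQuot.obj I (vtx K y.1)) ⊗[K]
            (CatQuot.obj I' (vtx K x.2) ⟶ CatQuot.obj I' (vtx K y.2)) from
          (eqToHom (congrArg (fun v => CatQuot.obj I (PathCat.vtx K v)) h.down)) ⊗ₜ[K]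
            (CatQuot.mkHom (PathCat.ofPath β.toPath))

/-- Composing the image of a path under `boxPre`. -/
def rho {x y : BoxQuiver V W} (p : Quiver.Path x y) :
    ((boxPre I I').obj x ⟶ (boxPre I I').obj y) :=
  composePath ((boxPre I I').mapPath p)

lemma rho_nil (x : BoxQuiver V W) : rho I I' (Quiver.Path.nil (a := x)) = 𝟙 _ := rfl

lemma rho_comp {x y z : BoxQuiver V W} (p : Quiver.Path x y) (q : Quiver.Path y z) :
    rho I I' (p.comp q) = rho I I' p ≫ rho I I' q := by
  rw [rho, Prefunctor.mapPath_comp, composePath_comp]; rfl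

lemma rho_cons {x y z : BoxQuiver V W} (p : Quiver.Path x y) (e : y ⟶ z) :
    rho I I' (p.cons e) = rho I I' p ≫ (boxPre I I').map e := rfl

/-- The linear map induced on each Hom space of the path category of the box quiver. -/
def Fmap (x y : BoxQuiver V W) :
    (Quiver.Path x y →₀ K) →ₗ[K] ((boxPre I I').obj x ⟶ (boxPre I I').obj y) :=
  Finsupp.linearCombination K (rho I I')

lemma Fmap_single {x y : BoxQuiver V W} (p : Quiver.Path x y) (c : K) :
    Fmap I I' x y (Finsupp.single p c) = c • rho I I' p :=
  Finsupp.linearCombination_single K c p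

lemma Fmap_pcomp {x y z : BoxQuiver V W} (f : Quiver.Path x y →₀ K)
    (g : Quiver.Path y z →₀ K) :
    Fmap I I' x z (pcomp f g) = Fmap I I' x y f ≫ Fmap I I' y z g := by
  classical
  induction f using Finsupp.induction_linear with
  | zero => simp [zero_pcomp]
  | add f f' hf hf' => rw [add_pcomp, map_add, hf, hf', map_add, Preadditive.add_comp]
  | single p c =>
      induction g using Finsupp.induction_linear with
      | zero => simp [pcomp_zero]
      | add g g' hg hg' => rw [pcomp_add, map_add, hg, hg', map_add, Preadditive.comp_add]
      | single q d =>
          rw [pcomp_single_single, Fmap_single, Fmap_single, Fmap_single, rho_comp,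
            CategoryTheory.Linear.smul_comp, CategoryTheory.Linear.comp_smul, smul_smul]

lemma liftHom_zero {V' : Type} [Quiver.{0} V'] (F : V ⥤q V') {a b : V} :
    liftHom (K := K) F (0 : Quiver.Path a b →₀ K) = 0 :=
  Finsupp.mapDomain_zero

lemma liftHom_add {V' : Type} [Quiver.{0} V'] (F : V ⥤q V') {a b : V}
    (f g : Quiver.Path a b →₀ K) :
    liftHom (K := K) F (f + g) = liftHom F f + liftHom F g :=
  Finsupp.mapDomain_add

lemma mkHom_zero {X Y : PathCat K V} {J : CatIdeal K (PathCat K V)} :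
    CatQuot.mkHom (I := J) (0 : X ⟶ Y) = 0 :=
  (Submodule.Quotient.mk_eq_zero _).2 (Submodule.zero_mem _)

lemma boxPre_map_inl {p p' : V} (q : W) (α : p ⟶ p') :
    (boxPre I I').map ((Sum.inl ⟨α, PLift.up rfl⟩ : BoxQuiver.mk p q ⟶ BoxQuiver.mk p' q))
      = (CatQuot.mkHom (PathCat.ofPath α.toPath)) ⊗ₜ[K] (𝟙 (CatQuot.obj I' (vtx K q))) := rfl

lemma boxPre_map_inr (p : V) {q q' : W} (β : q ⟶ q') :
    (boxPre I I').map ((Sum.inr ⟨PLift.up rfl, β⟩ : BoxQuiver.mk p q ⟶ BoxQuiver.mk p q'))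
      = (𝟙 (CatQuot.obj I (vtx K p))) ⊗ₜ[K] (CatQuot.mkHom (PathCat.ofPath β.toPath)) := rfl

lemma rho_toPath {x y : BoxQuiver V W} (e : x ⟶ y) :
    rho I I' e.toPath = (boxPre I I').map e := by
  show composePath ((boxPre I I').mapPath (Quiver.Path.nil.cons e)) = _
  rw [Prefunctor.mapPath_cons, Prefunctor.mapPath_nil]
  show 𝟙 _ ≫ (boxPre I I').map e = _
  rw [Category.id_comp]

lemma comp_toPath_eq_cons {a b c : V} (p : Quiver.Path a b) (e : b ⟶ c) :
    p.comp e.toPath = p.cons e := rfl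

lemma rho_inl (q : W) {a b : V} (p : Quiver.Path a b) :
    rho I I' ((inlPre q).mapPath p)
      = (CatQuot.mkHom (PathCat.ofPath p)) ⊗ₜ[K] (𝟙 (CatQuot.obj I' (vtx K q))) := by
  induction p with
  | nil => rfl
  | @cons b' c' p α ih =>
      rw [Prefunctor.mapPath_cons, rho_cons, ih]
      rw [show (inlPre q).map α
        = (Sum.inl ⟨α, PLift.up rfl⟩ : BoxQuiver.mk b' q ⟶ BoxQuiver.mk c' q) from rfl]
      erw [boxPre_map_inl, TensorCat.tmul_comp]
      exact congrArg₂ (fun m n => m ⊗ₜ[K] n)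
        ((CatQuot.mkHom_comp _ _).trans (congrArg CatQuot.mkHom (by
          show pcomp (Finsupp.single p 1) (Finsupp.single α.toPath 1) = Finsupp.single (p.cons α) 1
          rw [pcomp_single_single, one_mul, comp_toPath_eq_cons])))
        (Category.id_comp _)

lemma rho_inr (p : V) {a b : W} (t : Quiver.Path a b) :
    rho I I' ((inrPre p).mapPath t)
      = (𝟙 (CatQuot.obj I (vtx K p))) ⊗ₜ[K] (CatQuot.mkHom (PathCat.ofPath t)) := by
  induction t with
  | nil => rfl
  | @cons b' c' t β ih =>
      rw [Prefunctor.mapPath_cons, rho_cons, ih]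
      rw [show (inrPre p).map β
        = (Sum.inr ⟨PLift.up rfl, β⟩ : BoxQuiver.mk p b' ⟶ BoxQuiver.mk p c') from rfl]
      erw [boxPre_map_inr, TensorCat.tmul_comp]
      exact congrArg₂ (fun m n => m ⊗ₜ[K] n)
        (Category.id_comp _)
        ((CatQuot.mkHom_comp _ _).trans (congrArg CatQuot.mkHom (by
          show pcomp (Finsupp.single t 1) (Finsupp.single β.toPath 1) = Finsupp.single (t.cons β) 1
          rw [pcomp_single_single, one_mul, comp_toPath_eq_cons])))

lemma Fmap_inl (q : W) {a b : V} (f : Quiver.Path a b →₀ K) :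
    Fmap I I' (BoxQuiver.mk a q) (BoxQuiver.mk b q) (liftHom (inlPre q) f)
      = (CatQuot.mkHom (I := I) (X := vtx K a) (Y := vtx K b) f)
          ⊗ₜ[K] (𝟙 (CatQuot.obj I' (vtx K q))) := by
  classical
  induction f using Finsupp.induction_linear with
  | zero =>
      erw [liftHom_zero, map_zero, show CatQuot.mkHom (I := I) (X := vtx K a) (Y := vtx K b)
        (0 : Quiver.Path a b →₀ K) = 0 from mkHom_zero, zero_tmul]
      rfl
  | add f f' hf hf' =>
      erw [liftHom_add, map_add, hf, hf', ← add_tmul, ← CatQuot.mkHom_add]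
      rfl
  | single p c =>
      erw [liftHom_single, Fmap_single, rho_inl]
      show c • (CatQuot.mkHom (I := I) (X := vtx K a) (Y := vtx K b) (PathCat.ofPath p)
          ⊗ₜ[K] 𝟙 (CatQuot.obj I' (vtx K q)))
        = CatQuot.mkHom (I := I) (X := vtx K a) (Y := vtx K b) (Finsupp.single p c)
          ⊗ₜ[K] 𝟙 (CatQuot.obj I' (vtx K q))
      rw [show CatQuot.mkHom (I := I) (X := vtx K a) (Y := vtx K b) (Finsupp.single p c)
        = c • CatQuot.mkHom (PathCat.ofPath p) from by
          rw [← CatQuot.mkHom_smul]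
          show CatQuot.mkHom (I := I) (X := vtx K a) (Y := vtx K b) (Finsupp.single p c) = _
          rw [show (c • PathCat.ofPath p : (vtx K a : PathCat K V) ⟶ vtx K b)
            = Finsupp.single p c from by
              show c • Finsupp.single p (1 : K) = _
              rw [Finsupp.smul_single, smul_eq_mul, mul_one]]; rfl]
      rw [smul_tmul']

lemma Fmap_inr (p : V) {a b : W} (g : Quiver.Path a b →₀ K) :
    Fmap I I' (BoxQuiver.mk p a) (BoxQuiver.mk p b) (liftHom (inrPre p) g)
      = (𝟙 (CatQuot.obj I (vtx K p))) ⊗ₜ[K]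
          (CatQuot.mkHom (I := I') (X := vtx K a) (Y := vtx K b) g) := by
  classical
  induction g using Finsupp.induction_linear with
  | zero =>
      erw [liftHom_zero, map_zero, show CatQuot.mkHom (I := I') (X := vtx K a) (Y := vtx K b)
        (0 : Quiver.Path a b →₀ K) = 0 from mkHom_zero, tmul_zero]
      rfl
  | add g g' hg hg' =>
      erw [liftHom_add, map_add, hg, hg', ← tmul_add, ← CatQuot.mkHom_add]
      rfl
  | single t c =>
      erw [liftHom_single, Fmap_single, rho_inr]
      show c • (𝟙 (CatQuot.obj I (vtx K p)) ⊗ₜ[K]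
          CatQuot.mkHom (I := I') (X := vtx K a) (Y := vtx K b) (PathCat.ofPath t))
        = 𝟙 (CatQuot.obj I (vtx K p)) ⊗ₜ[K]
          CatQuot.mkHom (I := I') (X := vtx K a) (Y := vtx K b) (Finsupp.single t c)
      rw [show CatQuot.mkHom (I := I') (X := vtx K a) (Y := vtx K b) (Finsupp.single t c)
        = c • CatQuot.mkHom (PathCat.ofPath t) from by
          rw [← CatQuot.mkHom_smul]
          show CatQuot.mkHom (I := I') (X := vtx K a) (Y := vtx K b) (Finsupp.single t c) = _
          rw [show (c • PathCat.ofPath t : (vtx K a : PathCat K W) ⟶ vtx K b)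
            = Finsupp.single t c from by
              show c • Finsupp.single t (1 : K) = _
              rw [Finsupp.smul_single, smul_eq_mul, mul_one]]; rfl]
      rw [tmul_smul]

lemma Fmap_gen (g : Σ (A : PathCat K (BoxQuiver V W)) (B : PathCat K (BoxQuiver V W)), A ⟶ B)
    (hg : g ∈ boxGens I I') :
    Fmap I I' (PathCat.out g.1) (PathCat.out g.2.1) g.2.2 = 0 := by
  rcases hg with (⟨p, q, q', f0, hf0, rfl⟩ | ⟨p, p', q, f0, hf0, rfl⟩)
    | ⟨p, p', q, q', α, β, rfl⟩
  · show Fmap I I' (BoxQuiver.mk p q) (BoxQuiver.mk p q') (liftHom (inrPre p) f0) = 0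
    rw [Fmap_inr, CatQuot.mkHom_eq_zero hf0, tmul_zero]
    rfl
  · show Fmap I I' (BoxQuiver.mk p q) (BoxQuiver.mk p' q) (liftHom (inlPre q) f0) = 0
    rw [Fmap_inl, CatQuot.mkHom_eq_zero hf0, zero_tmul]
    rfl
  · show Fmap I I' (BoxQuiver.mk p q) (BoxQuiver.mk p' q') _ = 0
    erw [map_sub, Fmap_single, Fmap_single, one_smul, one_smul, rho_comp, rho_comp,
      rho_toPath, rho_toPath, rho_toPath, rho_toPath, boxPre_map_inl, boxPre_map_inr,
      boxPre_map_inl, boxPre_map_inr, TensorCat.tmul_comp, TensorCat.tmul_comp, sub_eq_zero]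
    exact congrArg₂ (fun m n => m ⊗ₜ[K] n)
      ((Category.comp_id _).trans (Category.id_comp _).symm)
      ((Category.id_comp _).trans (Category.comp_id _).symm)

lemma Fmap_vanish {x y : BoxQuiver V W} {f : Quiver.Path x y →₀ K}
    (hf : f ∈ (boxIdeal I I').I (vtx K x) (vtx K y)) : Fmap I I' x y f = 0 := by
  simp only [boxIdeal, genIdeal] at hf
  induction hf using Submodule.span_induction with
  | mem h hh =>
      obtain ⟨A, B, s, u, v, hs, rfl⟩ := hh
      show Fmap I I' x y (pcomp u (pcomp s v)) = 0
      erw [Fmap_pcomp I I' u (pcomp s v), Fmap_pcomp I I' s v, Fmap_gen I I' ⟨A, B, s⟩ hs]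
      rw [Limits.zero_comp, Limits.comp_zero]
      rfl
  | zero => rw [map_zero]
  | add a b _ _ ha hb => rw [map_add, ha, hb, add_zero]
  | smul c a _ ha => rw [map_smul, ha, smul_zero]

/-- The induced functor on the quotient category. -/
def Fquot : CatQuot (boxIdeal I I') ⥤ TensorCat K (CatQuot I) (CatQuot I') where
  obj X := (boxPre I I').obj X
  map {X Y} f :=
    Submodule.liftQ _ (Fmap I I' X Y)
      (fun u hu => LinearMap.mem_ker.2 (Fmap_vanish I I' hu)) f
  map_id X := by
    show Fmap I I' X X (Finsupp.single Quiver.Path.nil 1) = _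
    erw [Fmap_single, one_smul, rho_nil]
  map_comp {X Y Z} f g := by
    obtain ⟨f, rfl⟩ := Submodule.Quotient.mk_surjective _ f
    obtain ⟨g, rfl⟩ := Submodule.Quotient.mk_surjective _ g
    show Fmap I I' X Z (pcomp f g) = Fmap I I' X Y f ≫ Fmap I I' Y Z g
    exact Fmap_pcomp I I' f g

lemma liftHom_smul {V' : Type} [Quiver.{0} V'] (F : V ⥤q V') {a b : V} (c : K)
    (f : Quiver.Path a b →₀ K) :
    liftHom (K := K) F (c • f) = c • liftHom F f :=
  Finsupp.mapDomain_smul c f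

lemma comp_eq_pcomp {a b c : V} (f : Quiver.Path a b →₀ K) (g : Quiver.Path b c →₀ K) :
    (((f : (vtx K a : PathCat K V) ⟶ vtx K b) ≫ (g : (vtx K b : PathCat K V) ⟶ vtx K c) :
      (vtx K a : PathCat K V) ⟶ vtx K c)) = pcomp f g := rfl

lemma mem_boxIdeal_of_gen {x y : BoxQuiver V W} (s : Quiver.Path x y →₀ K)
    (hs : (⟨vtx K x, vtx K y, s⟩ :
        Σ (A : PathCat K (BoxQuiver V W)) (B : PathCat K (BoxQuiver V W)), A ⟶ B)
        ∈ boxGens I I') :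
    s ∈ (boxIdeal I I').I (vtx K x) (vtx K y) := by
  apply Submodule.subset_span
  refine ⟨vtx K x, vtx K y, s, 𝟙 _, 𝟙 _, hs, ?_⟩
  erw [Category.id_comp, Category.comp_id]

lemma gen_inr_mem (p : V) {q q' : W} (g : Quiver.Path q q' →₀ K)
    (hg : (g : (vtx K q : PathCat K W) ⟶ vtx K q') ∈ I'.I (vtx K q) (vtx K q')) :
    (liftHom (inrPre p) g : Quiver.Path (BoxQuiver.mk p q) (BoxQuiver.mk p q') →₀ K)
      ∈ (boxIdeal I I').I (vtx K (BoxQuiver.mk p q)) (vtx K (BoxQuiver.mk p q')) :=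
  mem_boxIdeal_of_gen I I' _ (Or.inl (Or.inl ⟨p, q, q', g, hg, rfl⟩))

lemma gen_inl_mem (q : W) {p p' : V} (f : Quiver.Path p p' →₀ K)
    (hf : (f : (vtx K p : PathCat K V) ⟶ vtx K p') ∈ I.I (vtx K p) (vtx K p')) :
    (liftHom (inlPre q) f : Quiver.Path (BoxQuiver.mk p q) (BoxQuiver.mk p' q) →₀ K)
      ∈ (boxIdeal I I').I (vtx K (BoxQuiver.mk p q)) (vtx K (BoxQuiver.mk p' q))  :=
  mem_boxIdeal_of_gen I I' _ (Or.inl (Or.inr ⟨p, p', q, f, hf, rfl⟩))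

lemma gen_comm_mem {p p' : V} {q q' : W} (α : p ⟶ p') (β : q ⟶ q') :
    (Finsupp.single ((Quiver.Hom.toPath
          (Sum.inl ⟨α, PLift.up rfl⟩ : BoxQuiver.mk p q ⟶ BoxQuiver.mk p' q)).comp
        (Quiver.Hom.toPath
          (Sum.inr ⟨PLift.up rfl, β⟩ : BoxQuiver.mk p' q ⟶ BoxQuiver.mk p' q'))) (1 : K)
      - Finsupp.single ((Quiver.Hom.toPath
          (Sum.inr ⟨PLift.up rfl, β⟩ : BoxQuiver.mk p q ⟶ BoxQuiver.mk p q')).comp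
        (Quiver.Hom.toPath
          (Sum.inl ⟨α, PLift.up rfl⟩ : BoxQuiver.mk p q' ⟶ BoxQuiver.mk p' q'))) 1)
      ∈ (boxIdeal I I').I (vtx K (BoxQuiver.mk p q)) (vtx K (BoxQuiver.mk p' q')) :=
  mem_boxIdeal_of_gen I I' _ (Or.inr ⟨p, p', q, q', α, β, rfl⟩)

lemma exchange_single {a c : V} (α : a ⟶ c) {b d : W} (t : Quiver.Path b d) :
    ((Finsupp.single (((inrPre a).mapPath t).comp (Quiver.Hom.toPath
        (Sum.inl ⟨α, PLift.up rfl⟩ : BoxQuiver.mk a d ⟶ BoxQuiver.mk c d))) (1 : K) :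
          Quiver.Path (BoxQuiver.mk a b) (BoxQuiver.mk c d) →₀ K)
      - (Finsupp.single ((Quiver.Hom.toPath
          (Sum.inl ⟨α, PLift.up rfl⟩ : BoxQuiver.mk a b ⟶ BoxQuiver.mk c b)).comp
          ((inrPre c).mapPath t)) (1 : K) :
          Quiver.Path (BoxQuiver.mk a b) (BoxQuiver.mk c d) →₀ K))
      ∈ (boxIdeal I I').I (vtx K (BoxQuiver.mk a b)) (vtx K (BoxQuiver.mk c d)) := by
  induction t with
  | nil =>
      erw [Prefunctor.mapPath_nil, Prefunctor.mapPath_nil, Quiver.Path.nil_comp,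
        sub_self]
      exact Submodule.zero_mem _
  | @cons e' d' t β ih =>
      -- the commutator generator for `α` and `β`
      have hg := gen_comm_mem I I' (p := a) (p' := c) (q := e') (q' := d') α β
      have hneg := Submodule.neg_mem _ hg
      rw [neg_sub] at hneg
      -- compose the commutator with the lifted path `t` on the left
      have h1 : (pcomp (Finsupp.single ((inrPre a).mapPath t) (1 : K))
            ((Finsupp.single ((Quiver.Hom.toPath
                (Sum.inr ⟨PLift.up rfl, β⟩ : BoxQuiver.mk a e' ⟶ BoxQuiver.mk a d')).comp
              (Quiver.Hom.toPath
                (Sum.inl ⟨α, PLift.up rfl⟩ : BoxQuiver.mk a d' ⟶ BoxQuiver.mk c d'))) (1 : K) :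
                Quiver.Path (BoxQuiver.mk a e') (BoxQuiver.mk c d') →₀ K)
            - (Finsupp.single ((Quiver.Hom.toPath
                (Sum.inl ⟨α, PLift.up rfl⟩ : BoxQuiver.mk a e' ⟶ BoxQuiver.mk c e')).comp
              (Quiver.Hom.toPath
                (Sum.inr ⟨PLift.up rfl, β⟩ : BoxQuiver.mk c e' ⟶ BoxQuiver.mk c d'))) (1 : K) :
                Quiver.Path (BoxQuiver.mk a e') (BoxQuiver.mk c d') →₀ K)) :
            Quiver.Path (BoxQuiver.mk a b) (BoxQuiver.mk c d') →₀ K)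
          ∈ (boxIdeal I I').I (vtx K (BoxQuiver.mk a b)) (vtx K (BoxQuiver.mk c d')) :=
        (boxIdeal I I').comp_right _ _ hneg
      erw [pcomp_sub, pcomp_single_single, pcomp_single_single, one_mul,
        ← Quiver.Path.comp_assoc, ← Quiver.Path.comp_assoc] at h1
      -- compose the inductive hypothesis with `β` on the right
      have h2 : (pcomp
            ((Finsupp.single (((inrPre a).mapPath t).comp (Quiver.Hom.toPath
                (Sum.inl ⟨α, PLift.up rfl⟩ : BoxQuiver.mk a e' ⟶ BoxQuiver.mk c e'))) (1 : K) :
                  Quiver.Path (BoxQuiver.mk a b) (BoxQuiver.mk c e') →₀ K)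
              - (Finsupp.single ((Quiver.Hom.toPath
                  (Sum.inl ⟨α, PLift.up rfl⟩ : BoxQuiver.mk a b ⟶ BoxQuiver.mk c b)).comp
                  ((inrPre c).mapPath t)) (1 : K) :
                  Quiver.Path (BoxQuiver.mk a b) (BoxQuiver.mk c e') →₀ K))
            (Finsupp.single (Quiver.Hom.toPath
                (Sum.inr ⟨PLift.up rfl, β⟩ : BoxQuiver.mk c e' ⟶ BoxQuiver.mk c d')) (1 : K)) :
            Quiver.Path (BoxQuiver.mk a b) (BoxQuiver.mk c d') →₀ K)
          ∈ (boxIdeal I I').I (vtx K (BoxQuiver.mk a b)) (vtx K (BoxQuiver.mk c d')) :=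
        (boxIdeal I I').comp_left _ _ ih
      erw [sub_pcomp, pcomp_single_single, pcomp_single_single, one_mul] at h2
      have h3 := Submodule.add_mem _ h1 h2
      erw [sub_add_sub_cancel] at h3
      exact h3

set_option maxHeartbeats 1000000 in
lemma exchange {a c : V} (α : a ⟶ c) {b d : W} (g : Quiver.Path b d →₀ K) :
    ((pcomp (liftHom (inrPre a) g) (Finsupp.single (Quiver.Hom.toPath
        (Sum.inl ⟨α, PLift.up rfl⟩ : BoxQuiver.mk a d ⟶ BoxQuiver.mk c d)) (1 : K)) :
          Quiver.Path (BoxQuiver.mk a b) (BoxQuiver.mk c d) →₀ K)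
      - (pcomp (Finsupp.single (Quiver.Hom.toPath
          (Sum.inl ⟨α, PLift.up rfl⟩ : BoxQuiver.mk a b ⟶ BoxQuiver.mk c b)) (1 : K))
        (liftHom (inrPre c) g) :
          Quiver.Path (BoxQuiver.mk a b) (BoxQuiver.mk c d) →₀ K))
      ∈ (boxIdeal I I').I (vtx K (BoxQuiver.mk a b)) (vtx K (BoxQuiver.mk c d)) := by
  induction g using Finsupp.induction_linear with
  | zero =>
      erw [liftHom_zero, liftHom_zero, zero_pcomp, pcomp_zero, sub_zero]
      exact Submodule.zero_mem _
  | add g g' hg hg' =>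
      erw [liftHom_add, liftHom_add, add_pcomp, pcomp_add, add_sub_add_comm]
      exact Submodule.add_mem _ hg hg'
  | single t k =>
      erw [liftHom_single, liftHom_single, pcomp_single_single, pcomp_single_single,
        mul_one, one_mul]
      have h := Submodule.smul_mem _ k (exchange_single I I' α t)
      erw [smul_sub, Finsupp.smul_single, Finsupp.smul_single, smul_eq_mul, mul_one] at h
      exact h

/-- The bilinear map underlying `Ψ`. -/
def psiAux (x y : BoxQuiver V W) :
    (Quiver.Path x.1 y.1 →₀ K) →ₗ[K] (Quiver.Path x.2 y.2 →₀ K) →ₗ[K]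
      (CatQuot.obj (boxIdeal I I') (vtx K x) ⟶ CatQuot.obj (boxIdeal I I') (vtx K y)) :=
  LinearMap.mk₂ K
    (fun f g => CatQuot.mkHom (I := boxIdeal I I') (X := vtx K x) (Y := vtx K y)
        (pcomp (liftHom (inlPre x.2) f) (liftHom (inrPre y.1) g)))
    (fun f f' g => by
      erw [liftHom_add, add_pcomp]
      exact CatQuot.mkHom_add _ _)
    (fun c f g => by
      erw [liftHom_smul, smul_pcomp]
      exact CatQuot.mkHom_smul _ _)
    (fun f g g' => by
      erw [liftHom_add, pcomp_add]
      exact CatQuot.mkHom_add _ _)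
    (fun c f g => by
      erw [liftHom_smul, pcomp_smul]
      exact CatQuot.mkHom_smul _ _)

/-- Quotient by `I'` in the second variable. -/
def psiAux2 (x y : BoxQuiver V W) :
    (Quiver.Path x.1 y.1 →₀ K) →ₗ[K]
      ((CatQuot.obj I' (vtx K x.2) ⟶ CatQuot.obj I' (vtx K y.2)) →ₗ[K]
        (CatQuot.obj (boxIdeal I I') (vtx K x) ⟶ CatQuot.obj (boxIdeal I I') (vtx K y))) where
  toFun f := Submodule.liftQ (I'.I (vtx K x.2) (vtx K y.2)) (psiAux I I' x y f)
    (fun g hg => LinearMap.mem_ker.2 (CatQuot.mkHom_eq_zero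
      ((boxIdeal I I').comp_right _ _ (gen_inr_mem I I' y.1 g hg))))
  map_add' f f' := LinearMap.ext fun g => by
    obtain ⟨g, rfl⟩ := Submodule.Quotient.mk_surjective _ g
    show (psiAux I I' x y (f + f')) g = (psiAux I I' x y f) g + (psiAux I I' x y f') g
    erw [map_add, LinearMap.add_apply]
  map_smul' c f := LinearMap.ext fun g => by
    obtain ⟨g, rfl⟩ := Submodule.Quotient.mk_surjective _ g
    show (psiAux I I' x y (c • f)) g = c • (psiAux I I' x y f) g
    erw [map_smul, LinearMap.smul_apply]

/-- Quotient by `I` in the first variable. -/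
def psiAux3 (x y : BoxQuiver V W) :
    (CatQuot.obj I (vtx K x.1) ⟶ CatQuot.obj I (vtx K y.1)) →ₗ[K]
      ((CatQuot.obj I' (vtx K x.2) ⟶ CatQuot.obj I' (vtx K y.2)) →ₗ[K]
        (CatQuot.obj (boxIdeal I I') (vtx K x) ⟶ CatQuot.obj (boxIdeal I I') (vtx K y))) :=
  Submodule.liftQ (I.I (vtx K x.1) (vtx K y.1)) (psiAux2 I I' x y)
    (fun f hf => LinearMap.mem_ker.2 (LinearMap.ext fun g => by
      obtain ⟨g, rfl⟩ := Submodule.Quotient.mk_surjective _ g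
      show (psiAux I I' x y f) g = 0
      exact CatQuot.mkHom_eq_zero
        ((boxIdeal I I').comp_left _ _ (gen_inl_mem I I' x.2 f hf))))

/-- The inverse map `Ψ` on Hom spaces. -/
def Psi (x y : BoxQuiver V W) :
    ((boxPre I I').obj x ⟶ (boxPre I I').obj y) →ₗ[K]
      (CatQuot.obj (boxIdeal I I') (vtx K x) ⟶ CatQuot.obj (boxIdeal I I') (vtx K y)) :=
  TensorProduct.lift (psiAux3 I I' x y)

lemma Psi_tmul (x y : BoxQuiver V W) (f : Quiver.Path x.1 y.1 →₀ K)
    (g : Quiver.Path x.2 y.2 →₀ K) :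
    Psi I I' x y ((Submodule.Quotient.mk f) ⊗ₜ[K] (Submodule.Quotient.mk g))
      = CatQuot.mkHom (I := boxIdeal I I') (X := vtx K x) (Y := vtx K y)
          (pcomp (liftHom (inlPre x.2) f) (liftHom (inrPre y.1) g)) := rfl

lemma mkHom_pcomp {J : CatIdeal K (PathCat K V)} {a b c : V} (f : Quiver.Path a b →₀ K)
    (g : Quiver.Path b c →₀ K) :
    CatQuot.mkHom (I := J) (X := vtx K a) (Y := vtx K c) (pcomp f g)
      = CatQuot.mkHom (I := J) (X := vtx K a) (Y := vtx K b) f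
          ≫ CatQuot.mkHom (I := J) (X := vtx K b) (Y := vtx K c) g := rfl

lemma Fquot_map_add {X Y : CatQuot (boxIdeal I I')} (f g : X ⟶ Y) :
    (Fquot I I').map (f + g) = (Fquot I I').map f + (Fquot I I').map g := by
  obtain ⟨f, rfl⟩ := Submodule.Quotient.mk_surjective _ f
  obtain ⟨g, rfl⟩ := Submodule.Quotient.mk_surjective _ g
  show Fmap I I' X Y (f + g) = Fmap I I' X Y f + Fmap I I' X Y g
  exact map_add _ _ _

lemma Fquot_map_smul {X Y : CatQuot (boxIdeal I I')} (c : K) (f : X ⟶ Y) :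
    (Fquot I I').map (c • f) = c • (Fquot I I').map f := by
  obtain ⟨f, rfl⟩ := Submodule.Quotient.mk_surjective _ f
  show Fmap I I' X Y (c • f) = c • Fmap I I' X Y f
  exact map_smul _ _ _

lemma Fquot_Psi {x y : BoxQuiver V W} (h : (boxPre I I').obj x ⟶ (boxPre I I').obj y) :
    (Fquot I I').map (Psi I I' x y h) = h := by
  induction h using TensorProduct.induction_on with
  | zero =>
      rw [map_zero]
      show Fmap I I' x y 0 = 0
      exact map_zero _
  | add a b ha hb => rw [map_add, Fquot_map_add, ha, hb]; rfl
  | tmul u v =>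
      obtain ⟨f, rfl⟩ := Submodule.Quotient.mk_surjective _ u
      obtain ⟨g, rfl⟩ := Submodule.Quotient.mk_surjective _ v
      erw [Psi_tmul]
      show Fmap I I' x y (pcomp (liftHom (inlPre x.2) f) (liftHom (inrPre y.1) g)) = _
      erw [Fmap_pcomp I I' (liftHom (inlPre x.2) f) (liftHom (inrPre y.1) g)]
      show Fmap I I' (BoxQuiver.mk x.1 x.2) (BoxQuiver.mk y.1 x.2) (liftHom (inlPre x.2) f)
          ≫ Fmap I I' (BoxQuiver.mk y.1 x.2) (BoxQuiver.mk y.1 y.2) (liftHom (inrPre y.1) g)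
        = _
      erw [Fmap_inl, Fmap_inr, TensorCat.tmul_comp]
      exact congrArg₂ (fun m n => m ⊗ₜ[K] n) (Category.comp_id _) (Category.id_comp _)

set_option maxHeartbeats 1000000 in
lemma Psi_comp_arrow {x z y : BoxQuiver V W} (h : (boxPre I I').obj x ⟶ (boxPre I I').obj z)
    (e : z ⟶ y) :
    Psi I I' x y (h ≫ (boxPre I I').map e)
      = Psi I I' x z h ≫ CatQuot.mkHom (I := boxIdeal I I') (X := vtx K z) (Y := vtx K y)
          (Finsupp.single e.toPath 1) := by
  induction h using TensorProduct.induction_on with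
  | zero => rw [Limits.zero_comp, map_zero, map_zero, Limits.zero_comp]
  | add a b ha hb => rw [Preadditive.add_comp, map_add, ha, hb, map_add, Preadditive.add_comp]
  | tmul u v =>
      obtain ⟨f, rfl⟩ := Submodule.Quotient.mk_surjective _ u
      obtain ⟨g, rfl⟩ := Submodule.Quotient.mk_surjective _ v
      obtain ⟨x1, x2⟩ := x
      obtain ⟨z1, z2⟩ := z
      obtain ⟨y1, y2⟩ := y
      rcases e with ⟨α, hd⟩ | ⟨hd, β⟩
      · -- an arrow of `V` : use the exchange relation
        obtain rfl : z2 = y2 := hd.down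
        show CatQuot.mkHom (I := boxIdeal I I') (X := vtx K (BoxQuiver.mk x1 x2))
            (Y := vtx K (BoxQuiver.mk y1 z2))
            (pcomp (liftHom (inlPre x2) (pcomp f (Finsupp.single α.toPath 1)))
              (liftHom (inrPre y1) (pcomp g (Finsupp.single Quiver.Path.nil 1))))
          = CatQuot.mkHom
              (pcomp (pcomp (liftHom (inlPre x2) f) (liftHom (inrPre z1) g))
                (Finsupp.single (Quiver.Hom.toPath
                  (Sum.inl ⟨α, PLift.up rfl⟩ : BoxQuiver.mk z1 z2 ⟶ BoxQuiver.mk y1 z2)) 1))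
        apply CatQuot.mkHom_eq_of_sub_mem
        erw [liftHom_pcomp (inlPre x2) f (Finsupp.single α.toPath 1),
          liftHom_pcomp (inrPre y1) g (Finsupp.single Quiver.Path.nil 1),
          liftHom_single (inlPre x2) α.toPath 1, liftHom_single (inrPre y1) Quiver.Path.nil 1,
          Prefunctor.mapPath_nil, Prefunctor.mapPath_toPath,
          pcomp_single_nil (liftHom (inrPre y1) g),
          pcomp_assoc (liftHom (inlPre x2) f) _ (liftHom (inrPre y1) g),
          pcomp_assoc (liftHom (inlPre x2) f) (liftHom (inrPre z1) g) _, ← pcomp_sub]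
        have hx := Submodule.neg_mem _ (exchange I I' α g)
        rw [neg_sub] at hx
        exact (boxIdeal I I').comp_right _ _ hx
      · -- an arrow of `W` : the two sides agree on the nose
        obtain rfl : z1 = y1 := hd.down
        show CatQuot.mkHom (I := boxIdeal I I') (X := vtx K (BoxQuiver.mk x1 x2))
            (Y := vtx K (BoxQuiver.mk z1 y2))
            (pcomp (liftHom (inlPre x2) (pcomp f (Finsupp.single Quiver.Path.nil 1)))
              (liftHom (inrPre z1) (pcomp g (Finsupp.single β.toPath 1))))
          = CatQuot.mkHom
              (pcomp (pcomp (liftHom (inlPre x2) f) (liftHom (inrPre z1) g))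
                (Finsupp.single (Quiver.Hom.toPath
                  (Sum.inr ⟨PLift.up rfl, β⟩ : BoxQuiver.mk z1 z2 ⟶ BoxQuiver.mk z1 y2)) 1))
        erw [liftHom_pcomp, liftHom_pcomp, liftHom_single, liftHom_single,
          Prefunctor.mapPath_nil, Prefunctor.mapPath_toPath,
          pcomp_single_nil,
          ← pcomp_assoc]
        rfl

lemma Psi_rho {x y : BoxQuiver V W} (r : Quiver.Path x y) :
    Psi I I' x y (rho I I' r)
      = CatQuot.mkHom (I := boxIdeal I I') (X := vtx K x) (Y := vtx K y)
          (Finsupp.single r 1) := by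
  induction r with
  | nil =>
      show CatQuot.mkHom (I := boxIdeal I I') (X := vtx K x) (Y := vtx K x)
          (pcomp (liftHom (inlPre x.2) (Finsupp.single Quiver.Path.nil 1))
            (liftHom (inrPre x.1) (Finsupp.single Quiver.Path.nil 1))) = _
      erw [liftHom_single, liftHom_single, Prefunctor.mapPath_nil,
        pcomp_single_single, one_mul, Quiver.Path.comp_nil]
      rfl
  | cons r e ih =>
      erw [rho_cons, Psi_comp_arrow, ih, ← mkHom_pcomp, pcomp_single_single, one_mul,
        comp_toPath_eq_cons]
      rfl

lemma Psi_Fquot {x y : BoxQuiver V W}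
    (h : CatQuot.obj (boxIdeal I I') (vtx K x) ⟶ CatQuot.obj (boxIdeal I I') (vtx K y)) :
    Psi I I' x y ((Fquot I I').map h) = h := by
  obtain ⟨f, rfl⟩ := Submodule.Quotient.mk_surjective _ h
  show Psi I I' x y (Fmap I I' x y f) = Submodule.Quotient.mk f
  induction f using Finsupp.induction_linear with
  | zero =>
      erw [map_zero]
      exact mkHom_zero.symm
  | add f f' hf hf' => erw [map_add, map_add, hf, hf', ← Submodule.Quotient.mk_add]
  | single p c =>
      erw [Fmap_single, map_smul, Psi_rho]
      exact (CatQuot.mkHom_smul c _).symm.trans (congrArg _ (by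
        show c • Finsupp.single p (1 : K) = Finsupp.single p c
        erw [Finsupp.smul_single, smul_eq_mul, mul_one]))

end BoxProof

end AuxProof

section Statement0

variable {K : Type} [Field K]

/-- Proposition 1.1 of the paper.
Let `Q` and `Q'` be strongly locally finite quivers and let `I ⊂ KQ`, `I' ⊂ KQ'` be
admissible ideals, inducing ideals `ℐ`, `ℐ'` in the path categories.  Then there is an
isomorphism of `K`-categories `K(𝒬 × 𝒬')/(ℐ □ ℐ') ≅ (K𝒬/ℐ) ⊗_K (K𝒬'/ℐ')`. -/
theorem statement_0 (V W : Type) [Quiver.{0} V] [Quiver.{0} W]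
    [StronglyLocallyFinite V] [StronglyLocallyFinite W]
    (I : CatIdeal K (PathCat K V)) (I' : CatIdeal K (PathCat K W))
    (hI : IsAdmissible I) (hI' : IsAdmissible I') :
    Nonempty (LinearCatIso K (CatQuot (boxIdeal I I'))
      (TensorCat K (CatQuot I) (CatQuot I'))) := by
  constructor
  refine { F := BoxProof.Fquot I I', objBijective := ?_, homBijective := ?_, additive := ?_, linear := ?_ }
  · exact Function.bijective_id
  · intro X Y
    constructor
    · intro h1 h2 heq
      have h := congrArg (BoxProof.Psi I I' X Y) heq
      erw [BoxProof.Psi_Fquot, BoxProof.Psi_Fquot] at h; exact h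
    · intro h
      exact ⟨BoxProof.Psi I I' X Y h, BoxProof.Fquot_Psi I I' h⟩
  · exact { map_add := fun {X Y f g} => BoxProof.Fquot_map_add I I' f g }
  · letI : (BoxProof.Fquot I I').Additive :=
      { map_add := fun {X Y f g} => BoxProof.Fquot_map_add I I' f g }
    exact { map_smul := fun {X Y} f c => BoxProof.Fquot_map_smul I I' c f }

end Statement0
end Paper
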